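/- Let G be an undirected graph with independence number α(G) = 2 in which every maximum independent set (every non-adjacent pair of vertices) is weakly compatible. Then the vertex set of G can be partitioned into two cliques; equivalently, the complement of G is bipartite. -/
import Mathlib


lemma key19 {V : Type*} [Fintype V] (G : SimpleGraph V)
    (h3 : ∀ a b c : V, a ≠ b → a ≠ c → b ≠ c →
      ¬ G.Adj a b → ¬ G.Adj a c → ¬ G.Adj b c → False)
    (hwc : ∀ a b : V, a ≠ b → ¬ G.Adj a b →
      ∀ u v : V, u ≠ a → u ≠ b → v ≠ a → v ≠ b → u ≠ v →
        (G.Adj u v → (G.Adj a u ∧ G.Adj a v) ∨ (G.Adj b u ∧ G.Adj b v)) ∧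
        (¬ G.Adj u v → ((G.Adj a u ∧ G.Adj a v) ↔ (G.Adj b u ∧ G.Adj b v)))) :
    ∀ n (S : Finset V), S.card ≤ n →
      ∃ C : Set V, C ⊆ ↑S ∧ G.IsClique C ∧ G.IsClique (↑S \ C) := by
  classical
  intro n
  induction n with
  | zero =>
    intro S hS
    have : S = ∅ := Finset.card_eq_zero.mp (Nat.le_zero.mp hS)
    exact ⟨∅, by simp, by simp, by simp [this]⟩
  | succ n ih =>
    intro S hS
    by_cases hcl : ∀ a ∈ S, ∀ b ∈ S, a ≠ b → G.Adj a b
    · refine ⟨↑S, le_refl _, ?_, by simp⟩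
      intro u hu v hv huv
      exact hcl u hu v hv huv
    · push_neg at hcl
      obtain ⟨a, ha, b, hb, hab, hnab⟩ := hcl
      set X : Finset V := S.filter (fun x => x ≠ a ∧ x ≠ b ∧ G.Adj a x ∧ G.Adj b x) with hX
      have memX : ∀ x, x ∈ X ↔ x ∈ S ∧ x ≠ a ∧ x ≠ b ∧ G.Adj a x ∧ G.Adj b x := by
        intro x; simp [hX]
      have hXcard : X.card ≤ n := by
        have hsub : X ⊆ S.erase a := by
          intro x hx
          rw [memX] at hx
          exact Finset.mem_erase.mpr ⟨hx.2.1, hx.1⟩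
        have := Finset.card_le_card hsub
        rw [Finset.card_erase_of_mem ha] at this
        omega
      obtain ⟨C0, hC0sub, hC0, hC0'⟩ := ih X hXcard
      -- key adjacency lemmas
      have lemL : ∀ u v : V, u ≠ a → u ≠ b → v ≠ a → v ≠ b → u ≠ v →
          G.Adj a u → G.Adj a v → ¬ G.Adj b u → G.Adj u v := by
        intro u v hua hub hva hvb huv hau hav hnbu
        by_contra h
        exact hnbu (((hwc a b hab hnab u v hua hub hva hvb huv).2 h).mp ⟨hau, hav⟩).1
      have lemR : ∀ u v : V, u ≠ a → u ≠ b → v ≠ a → v ≠ b → u ≠ v →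
          G.Adj b u → G.Adj b v → ¬ G.Adj a u → G.Adj u v := by
        intro u v hua hub hva hvb huv hbu hbv hnau
        by_contra h
        exact hnau (((hwc a b hab hnab u v hua hub hva hvb huv).2 h).mpr ⟨hbu, hbv⟩).1
      set A' : Set V := {u | u ∈ S ∧ u ≠ a ∧ u ≠ b ∧ G.Adj a u ∧ ¬ G.Adj b u} with hA'
      refine ⟨insert a (A' ∪ C0), ?_, ?_, ?_⟩
      · -- subset of S
        intro v hv
        rcases hv with rfl | hv | hv
        · exact ha
        · exact hv.1
        · exact ((memX _).mp (hC0sub hv)).1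
      · -- first clique
        intro u hu v hv huv
        have adjA'X : ∀ u v : V, u ∈ A' → v ∈ A' ∪ ↑X → u ≠ v → G.Adj u v := by
          intro u v hu hv huv
          rcases hv with hv | hv
          · exact lemL u v hu.2.1 hu.2.2.1 hv.2.1 hv.2.2.1 huv hu.2.2.2.1 hv.2.2.2.1 hu.2.2.2.2
          · rw [Finset.mem_coe, memX] at hv
            exact lemL u v hu.2.1 hu.2.2.1 hv.2.1 hv.2.2.1 huv hu.2.2.2.1 hv.2.2.2.1 hu.2.2.2.2
        rcases hu with rfl | hu | hu
        · rcases hv with rfl | hv | hv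
          · exact absurd rfl huv
          · exact hv.2.2.2.1
          · exact ((memX _).mp (hC0sub hv)).2.2.2.1
        · rcases hv with rfl | hv | hv
          · exact (hu.2.2.2.1).symm
          · exact adjA'X u v hu (Or.inl hv) huv
          · exact adjA'X u v hu (Or.inr (hC0sub hv)) huv
        · rcases hv with rfl | hv | hv
          · exact (((memX _).mp (hC0sub hu)).2.2.2.1).symm
          · exact (adjA'X v u hv (Or.inr (hC0sub hu)) huv.symm).symm
          · exact hC0 hu hv huv
      · -- second clique
        set B' : Set V := {u | u ∈ S ∧ u ≠ a ∧ u ≠ b ∧ G.Adj b u ∧ ¬ G.Adj a u} with hB'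
        have hmem : ∀ v, v ∈ (↑S \ insert a (A' ∪ C0) : Set V) →
            v = b ∨ v ∈ B' ∨ v ∈ (↑X \ C0 : Set V) := by
          intro v hv
          obtain ⟨hvS, hvC⟩ := hv
          have hvS' : v ∈ S := hvS
          have hva : v ≠ a := fun h => hvC (by rw [h]; exact Set.mem_insert _ _)
          by_cases hvb : v = b
          · exact Or.inl hvb
          by_cases hav : G.Adj a v
          · by_cases hbv : G.Adj b v
            · have hvX : v ∈ (↑X : Set V) := by
                rw [Finset.mem_coe, memX]; exact ⟨hvS', hva, hvb, hav, hbv⟩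
              have hvd : v ∈ (↑X \ C0 : Set V) :=
                Set.mem_diff_of_mem hvX
                  (fun h => hvC (Set.mem_insert_of_mem _ (Set.mem_union_right _ h)))
              exact Or.inr (Or.inr hvd)
            · have hvA : v ∈ A' := by
                simp only [hA', Set.mem_setOf_eq]
                exact ⟨hvS', hva, hvb, hav, hbv⟩
              exact absurd (Set.mem_insert_of_mem _ (Set.mem_union_left _ hvA)) hvC
          · by_cases hbv : G.Adj b v
            · have hvB : v ∈ B' := by
                simp only [hB', Set.mem_setOf_eq]
                exact ⟨hvS', hva, hvb, hbv, hav⟩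
              exact Or.inr (Or.inl hvB)
            · exact (h3 a b v hab (Ne.symm hva) (Ne.symm hvb) hnab hav hbv).elim
        intro u hu v hv huv
        have hu' := hmem u hu
        have hv' := hmem v hv
        have adjB'X : ∀ u v : V, u ∈ B' → v ∈ B' ∪ ↑X → u ≠ v → G.Adj u v := by
          intro u v hu hv huv
          rcases hv with hv | hv
          · exact lemR u v hu.2.1 hu.2.2.1 hv.2.1 hv.2.2.1 huv hu.2.2.2.1 hv.2.2.2.1 hu.2.2.2.2
          · rw [Finset.mem_coe, memX] at hv
            exact lemR u v hu.2.1 hu.2.2.1 hv.2.1 hv.2.2.1 huv hu.2.2.2.1 hv.2.2.2.2 hu.2.2.2.2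
        rcases hu' with rfl | hu' | hu'
        · rcases hv' with rfl | hv' | hv'
          · exact absurd rfl huv
          · exact hv'.2.2.2.1
          · exact ((memX _).mp hv'.1).2.2.2.2
        · rcases hv' with rfl | hv' | hv'
          · exact (hu'.2.2.2.1).symm
          · exact adjB'X u v hu' (Or.inl hv') huv
          · exact adjB'X u v hu' (Or.inr hv'.1) huv
        · rcases hv' with rfl | hv' | hv'
          · exact (((memX _).mp hu'.1).2.2.2.2).symm
          · exact (adjB'X v u hv' (Or.inr hu'.1) huv.symm).symm
          · exact hC0' hu' hv' huv

/-- Let `G` be an undirected graph with independence number `α(G) = 2` (there is a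
non-adjacent pair of distinct vertices, and no independent set of size three), in
which every non-adjacent pair `{a,b}` (i.e. every maximum independent set) is weakly
compatible: for all distinct `u, v ∉ {a,b}`, if `uv` is an edge then `a` or `b` is
adjacent to both `u` and `v`, and if `uv` is a non-edge then the number of vertices
of `{a,b}` adjacent to both `u` and `v` is `0` or `2` (never exactly `1`).  Then the
vertex set of `G` can be partitioned into two cliques (equivalently, the complement
of `G` is bipartite). -/
theorem stmt19 {V : Type*} [Fintype V] (G : SimpleGraph V)
    (h2 : ∃ a b : V, a ≠ b ∧ ¬ G.Adj a b)
    (h3 : ∀ a b c : V, a ≠ b → a ≠ c → b ≠ c →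
      ¬ G.Adj a b → ¬ G.Adj a c → ¬ G.Adj b c → False)
    (hwc : ∀ a b : V, a ≠ b → ¬ G.Adj a b →
      ∀ u v : V, u ≠ a → u ≠ b → v ≠ a → v ≠ b → u ≠ v →
        (G.Adj u v → (G.Adj a u ∧ G.Adj a v) ∨ (G.Adj b u ∧ G.Adj b v)) ∧
        (¬ G.Adj u v → ((G.Adj a u ∧ G.Adj a v) ↔ (G.Adj b u ∧ G.Adj b v)))) :
    ∃ C : Set V, G.IsClique C ∧ G.IsClique Cᶜ := by
  classical
  obtain ⟨C, -, hC, hC'⟩ := key19 G h3 hwc (Fintype.card V) Finset.univ (by simp)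
  refine ⟨C, hC, ?_⟩
  have : ((Finset.univ : Finset V) : Set V) \ C = Cᶜ := by
    simp [Set.compl_eq_univ_diff]
  rwa [this] at hC'
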